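/- Let T be a bounded linear operator on a complex Hilbert space H, x a unit vector, r ≥ 1 real and 0 < α < 1. Then |⟨|T||T*|x,x⟩|^{2r} ≤ ⟨((1-α)|T|^{2r/(1-α)} + α|T*|^{2r/α})x,x⟩. -/

import Mathlib

set_option synthInstance.maxHeartbeats 1000000
set_option maxHeartbeats 1000000

open scoped InnerProductSpace NNReal

noncomputable def opAbs {H : Type*} [NormedAddCommGroup H] [InnerProductSpace ℂ H]
    [CompleteSpace H] (T : H →L[ℂ] H) : H →L[ℂ] H :=
  CFC.sqrt ((ContinuousLinearMap.adjoint T) * T)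

noncomputable def numRadius {H : Type*} [NormedAddCommGroup H] [InnerProductSpace ℂ H]
    (T : H →L[ℂ] H) : ℝ :=
  ⨆ x : {y : H // ‖y‖ = 1}, ‖⟪T (x : H), (x : H)⟫_ℂ‖


section Helpers

variable {H : Type*} [NormedAddCommGroup H] [InnerProductSpace ℂ H] [CompleteSpace H]

lemma innerRe_mono {A B : H →L[ℂ] H} (h : A ≤ B) (x : H) :
    (⟪A x, x⟫_ℂ).re ≤ (⟪B x, x⟫_ℂ).re := by
  have h0 : 0 ≤ B - A := sub_nonneg.mpr h
  have h1 := ((ContinuousLinearMap.nonneg_iff_isPositive _).mp h0).inner_nonneg_left x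
  simp only [ContinuousLinearMap.sub_apply, inner_sub_left, RCLike.re_to_complex,
    Complex.sub_re] at h1
  have h2 := (Complex.le_def.mp h1).1
  simp only [Complex.zero_re, Complex.sub_re] at h2
  linarith

lemma innerRe_nonneg {A : H →L[ℂ] H} (hA : 0 ≤ A) (x : H) : 0 ≤ (⟪A x, x⟫_ℂ).re := by
  simpa using innerRe_mono hA x

lemma mccarthy (A : H →L[ℂ] H) (hA : 0 ≤ A) (x : H) (hx : ‖x‖ = 1) {p : ℝ} (hp : 1 ≤ p) :
    (⟪A x, x⟫_ℂ).re ^ p ≤ (⟪CFC.rpow A p x, x⟫_ℂ).re := by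
  set a0 := (⟪A x, x⟫_ℂ).re with ha0def
  set m := (⟪CFC.rpow A p x, x⟫_ℂ).re with hmdef
  have hm : 0 ≤ m := innerRe_nonneg (CFC.rpow_nonneg (a := A) (y := p)) x
  have ha0 : 0 ≤ a0 := innerRe_nonneg hA x
  rcases eq_or_lt_of_le hp with heq | hlt
  · rw [← heq, Real.rpow_one]
    have h1 : CFC.rpow A (1 : ℝ) = A := by rw [CFC.rpow_eq_pow, CFC.rpow_one A hA]
    rw [hmdef, ← heq, h1]
  · -- p > 1
    set q : ℝ := p / (p - 1) with hqdef
    have hpq : p.HolderConjugate q := Real.HolderConjugate.conjExponent hlt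
    have hq1 : 1 < q := hpq.symm.lt
    have hq0 : 0 < q := hpq.symm.pos
    have hp0 : 0 < p := hpq.pos
    have key : ∀ ε : ℝ, 0 < ε → a0 ≤ (ε ^ (p / q) * p)⁻¹ * m + ε / q := by
      intro ε hε
      set e : ℝ≥0 := ε.toNNReal with hedef
      have hecoe : (e : ℝ) = ε := Real.coe_toNNReal ε hε.le
      have he0 : 0 < e := Real.toNNReal_pos.mpr hε
      set C : ℝ≥0 := (e ^ (p / q) * p.toNNReal)⁻¹ with hCdef
      set D : ℝ≥0 := e / q.toNNReal with hDdef
      -- scalar inequality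
      have scalar : ∀ t : ℝ≥0, t ≤ C * t ^ p + D := by
        intro t
        rw [← NNReal.coe_le_coe]
        rw [hCdef, hDdef]
        push_cast [NNReal.coe_rpow, Real.coe_toNNReal p hp0.le, Real.coe_toNNReal q hq0.le, hecoe]
        have hεq : (0:ℝ) < ε ^ (1 / q) := Real.rpow_pos_of_pos hε _
        have young := Real.young_inequality_of_nonneg
          (a := (t : ℝ) / ε ^ (1 / q)) (b := ε ^ (1 / q))
          (div_nonneg t.coe_nonneg hεq.le) hεq.le hpq
        have e1 : (ε ^ (1 / q)) ^ p = ε ^ (p / q) := by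
          rw [← Real.rpow_mul hε.le, one_div, inv_mul_eq_div]
        have e2 : (ε ^ (1 / q)) ^ q = ε := by
          rw [← Real.rpow_mul hε.le, one_div, inv_mul_cancel₀ hq0.ne', Real.rpow_one]
        rw [div_mul_cancel₀ _ hεq.ne', Real.div_rpow t.coe_nonneg hεq.le, e1, e2,
          div_div, div_eq_mul_inv, mul_comm] at young
        exact young
      have hcont : Continuous (fun t : ℝ≥0 => C * t ^ p + D) :=
        (continuous_const.mul (NNReal.continuous_rpow_const hp0.le)).add continuous_const
      have hop : A ≤ cfc (fun t : ℝ≥0 => C * t ^ p + D) A := by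
        conv_lhs => rw [← cfc_id ℝ≥0 A hA]
        exact cfc_mono (fun t _ => scalar t) continuous_id.continuousOn hcont.continuousOn
      have hdec : cfc (fun t : ℝ≥0 => C * t ^ p + D) A =
          C • CFC.rpow A p + algebraMap ℝ≥0 (H →L[ℂ] H) D := by
        rw [cfc_add_const D (fun t : ℝ≥0 => C * t ^ p) A
            ((continuous_const.mul (NNReal.continuous_rpow_const hp0.le)).continuousOn) hA]
        congr 1
        exact cfc_const_mul C (fun t : ℝ≥0 => t ^ p) A
            ((NNReal.continuous_rpow_const hp0.le).continuousOn)
      have hmono := innerRe_mono (hop.trans_eq hdec) x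
      have hxx : (⟪x, x⟫_ℂ).re = 1 := by
        have := inner_self_eq_norm_sq (𝕜 := ℂ) (x := x)
        simp only [RCLike.re_to_complex] at this
        rw [this, hx, one_pow]
      have h1 : ∀ (c : ℝ≥0) (M : H →L[ℂ] H),
          (⟪(c • M) x, x⟫_ℂ).re = (c : ℝ) * (⟪M x, x⟫_ℂ).re := by
        intro c M
        rw [ContinuousLinearMap.smul_apply, NNReal.smul_def,
          RCLike.real_smul_eq_coe_smul (K := ℂ), inner_smul_left]
        simp [Complex.conj_ofReal, Complex.mul_re]
      have h2 : (⟪(algebraMap ℝ≥0 (H →L[ℂ] H) D) x, x⟫_ℂ).re = (D : ℝ) := by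
        rw [Algebra.algebraMap_eq_smul_one, h1 D 1, ContinuousLinearMap.one_apply, hxx, mul_one]
      have hre : (⟪(C • CFC.rpow A p + algebraMap ℝ≥0 (H →L[ℂ] H) D) x, x⟫_ℂ).re
          = (C : ℝ) * m + (D : ℝ) := by
        rw [ContinuousLinearMap.add_apply, inner_add_left, Complex.add_re, h1, h2, hmdef]
      rw [hre] at hmono
      rw [hCdef, hDdef] at hmono
      push_cast [NNReal.coe_rpow, Real.coe_toNNReal p hp0.le, Real.coe_toNNReal q hq0.le,
        hecoe] at hmono
      exact hmono
    rcases eq_or_lt_of_le hm with hm0 | hm0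
    · -- m = 0
      have ha00 : a0 ≤ 0 := by
        refine le_of_forall_pos_le_add ?_
        intro δ hδ
        have hk := key (q * δ) (by positivity)
        rw [← hm0, mul_zero, zero_add, mul_div_cancel_left₀ _ hq0.ne'] at hk
        linarith
      have ha0eq : a0 = 0 := le_antisymm ha00 ha0
      rw [ha0eq, ← hm0, Real.zero_rpow hp0.ne']
    · -- m > 0
      have hεpos : (0:ℝ) < m ^ (p⁻¹ : ℝ) := Real.rpow_pos_of_pos hm0 _
      have hk := key (m ^ (p⁻¹ : ℝ)) hεpos
      have e1 : (m ^ (p⁻¹ : ℝ)) ^ (p / q) = m ^ (q⁻¹ : ℝ) := by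
        rw [← Real.rpow_mul hm0.le]
        congr 1
        field_simp
      have e2 : (m ^ (q⁻¹ : ℝ) * p)⁻¹ * m = m ^ (p⁻¹ : ℝ) / p := by
        have : m ^ (p⁻¹ : ℝ) = m ^ ((1 : ℝ) - q⁻¹) := by
          congr 1
          have := hpq.inv_add_inv_eq_one
          linarith
        rw [this, Real.rpow_sub hm0, Real.rpow_one, mul_inv, div_eq_mul_inv, div_eq_mul_inv]
        ring
      rw [e1] at hk
      rw [e2] at hk
      have hsum : m ^ (p⁻¹ : ℝ) / p + m ^ (p⁻¹ : ℝ) / q = m ^ (p⁻¹ : ℝ) := by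
        have h := hpq.inv_add_inv_eq_one
        have hqp : q + p = p * q := by
          field_simp at h
          linarith
        rw [div_eq_mul_inv, div_eq_mul_inv, ← mul_add, h, mul_one]
      rw [hsum] at hk
      calc a0 ^ p ≤ (m ^ (p⁻¹ : ℝ)) ^ p := Real.rpow_le_rpow ha0 hk hp0.le
        _ = m := by
          rw [← Real.rpow_mul hm0.le, inv_mul_cancel₀ hp0.ne', Real.rpow_one]


end Helpers

theorem stmt_9 {H : Type*} [NormedAddCommGroup H] [InnerProductSpace ℂ H] [CompleteSpace H]
    (T : H →L[ℂ] H) (x : H) (hx : ‖x‖ = 1) (r α : ℝ) (hr : 1 ≤ r) (hα0 : 0 < α) (hα1 : α < 1) :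
    ‖⟪(opAbs T) ((opAbs (ContinuousLinearMap.adjoint T)) x), x⟫_ℂ‖ ^ (2 * r) ≤
      (⟪((1 - α) • CFC.rpow (opAbs T) (2 * r / (1 - α)) +
          α • CFC.rpow (opAbs (ContinuousLinearMap.adjoint T)) (2 * r / α)) x, x⟫_ℂ).re := by
  set A := opAbs T with hAdef
  set B := opAbs (ContinuousLinearMap.adjoint T) with hBdef
  have hA : 0 ≤ A := CFC.sqrt_nonneg _
  have hB : 0 ≤ B := CFC.sqrt_nonneg _
  have hα1' : 0 < 1 - α := by linarith
  have hr0 : 0 < r := lt_of_lt_of_le one_pos hr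
  have hAsa : IsSelfAdjoint A := IsSelfAdjoint.of_nonneg hA
  have hBsa : IsSelfAdjoint B := IsSelfAdjoint.of_nonneg hB
  have hAadj : ContinuousLinearMap.adjoint A = A :=
    (ContinuousLinearMap.isSelfAdjoint_iff' (A := A)).mp hAsa
  have hBadj : ContinuousLinearMap.adjoint B = B :=
    (ContinuousLinearMap.isSelfAdjoint_iff' (A := B)).mp hBsa
  -- Cauchy-Schwarz step
  have hswap : ⟪A (B x), x⟫_ℂ = ⟪B x, A x⟫_ℂ := by
    conv_lhs => rw [← hAadj]
    exact ContinuousLinearMap.adjoint_inner_left A x (B x)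
  have hCS : ‖⟪A (B x), x⟫_ℂ‖ ≤ ‖B x‖ * ‖A x‖ := by
    rw [hswap]; exact norm_inner_le_norm _ _
  -- squares
  have hsq : ∀ (M : H →L[ℂ] H), 0 ≤ M → (hMadj : ContinuousLinearMap.adjoint M = M) →
      (⟪CFC.rpow M 2 x, x⟫_ℂ).re = ‖M x‖ ^ 2 := by
    intro M hM hMadj
    have h2 : CFC.rpow M (2:ℝ) = M * M := by
      rw [CFC.rpow_eq_pow]
      have := CFC.rpow_natCast M 2 hM
      norm_num at this
      rw [this]
      exact sq M
    rw [h2, ContinuousLinearMap.mul_apply]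
    have hswap2 : ⟪M (M x), x⟫_ℂ = ⟪M x, M x⟫_ℂ := by
      rw [← ContinuousLinearMap.adjoint_inner_left M x (M x), hMadj]
    rw [hswap2]
    have := inner_self_eq_norm_sq (𝕜 := ℂ) (x := M x)
    simp only [RCLike.re_to_complex] at this
    rw [this]
  have hA2 : (⟪CFC.rpow A 2 x, x⟫_ℂ).re = ‖A x‖ ^ 2 := hsq A hA hAadj
  have hB2 : (⟪CFC.rpow B 2 x, x⟫_ℂ).re = ‖B x‖ ^ 2 := hsq B hB hBadj
  -- McCarthy step for each operator
  have hMc : ∀ (M : H →L[ℂ] H), 0 ≤ M → (⟪CFC.rpow M 2 x, x⟫_ℂ).re = ‖M x‖ ^ 2 →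
      ∀ (β : ℝ), 0 < β → β < 1 →
      ((‖M x‖ ^ 2) ^ r : ℝ) ≤ ((⟪CFC.rpow M (2 * r / β) x, x⟫_ℂ).re) ^ β := by
    intro M hM heq β hβ0 hβ1
    have hβr : 1 ≤ r / β := by
      rw [le_div_iff₀ hβ0]
      nlinarith
    have hN : 0 ≤ CFC.rpow M (2:ℝ) := CFC.rpow_nonneg
    have hmc := mccarthy (CFC.rpow M 2) hN x hx hβr
    have hcomp : CFC.rpow (CFC.rpow M 2) (r / β) = CFC.rpow M (2 * r / β) := by
      have h := CFC.rpow_rpow_of_exponent_nonneg M 2 (r / β) (by norm_num)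
        (div_nonneg hr0.le hβ0.le) hM
      rw [mul_div_assoc'] at h
      exact h
    rw [hcomp, heq] at hmc
    have hX : (0:ℝ) ≤ ‖M x‖ ^ 2 := by positivity
    have hXr : ((‖M x‖ ^ 2 : ℝ) ^ r) = ((‖M x‖ ^ 2 : ℝ) ^ (r / β)) ^ β := by
      rw [← Real.rpow_mul hX, div_mul_cancel₀ r hβ0.ne']
    rw [hXr]
    exact Real.rpow_le_rpow (Real.rpow_nonneg hX _) hmc hβ0.le
  set YA := (⟪CFC.rpow A (2 * r / (1 - α)) x, x⟫_ℂ).re with hYAdef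
  set YB := (⟪CFC.rpow B (2 * r / α) x, x⟫_ℂ).re with hYBdef
  have hYAnn : 0 ≤ YA := innerRe_nonneg CFC.rpow_nonneg x
  have hYBnn : 0 ≤ YB := innerRe_nonneg CFC.rpow_nonneg x
  have hYA : ((‖A x‖ ^ 2) ^ r : ℝ) ≤ YA ^ (1 - α) := hMc A hA hA2 (1 - α) hα1' (by linarith)
  have hYB : ((‖B x‖ ^ 2) ^ r : ℝ) ≤ YB ^ α := hMc B hB hB2 α hα0 hα1
  have hsmul : ∀ (c : ℝ) (M : H →L[ℂ] H),
      (⟪(c • M) x, x⟫_ℂ).re = c * (⟪M x, x⟫_ℂ).re := by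
    intro c M
    rw [ContinuousLinearMap.smul_apply, RCLike.real_smul_eq_coe_smul (K := ℂ), inner_smul_left]
    simp [Complex.conj_ofReal, Complex.mul_re]
  have hnr : ∀ v : H, ‖v‖ ^ (2 * r) = ((‖v‖ ^ 2 : ℝ)) ^ r := by
    intro v
    rw [Real.rpow_mul (norm_nonneg v)]
    congr 1
    rw [show ((2:ℝ)) = ((2:ℕ):ℝ) by norm_num, Real.rpow_natCast]
  calc ‖⟪A (B x), x⟫_ℂ‖ ^ (2 * r)
      ≤ (‖B x‖ * ‖A x‖) ^ (2 * r) :=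
        Real.rpow_le_rpow (norm_nonneg _) hCS (by positivity)
    _ = ((‖B x‖ ^ 2 : ℝ)) ^ r * ((‖A x‖ ^ 2 : ℝ)) ^ r := by
        rw [Real.mul_rpow (norm_nonneg _) (norm_nonneg _), hnr, hnr]
    _ ≤ YB ^ α * YA ^ (1 - α) :=
        mul_le_mul hYB hYA (by positivity) (Real.rpow_nonneg hYBnn _)
    _ = YA ^ (1 - α) * YB ^ α := mul_comm _ _
    _ ≤ (1 - α) * YA + α * YB :=
        Real.geom_mean_le_arith_mean2_weighted hα1'.le hα0.le hYAnn hYBnn (by ring)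
    _ = (⟪((1 - α) • CFC.rpow A (2 * r / (1 - α)) + α • CFC.rpow B (2 * r / α)) x, x⟫_ℂ).re := by
        rw [ContinuousLinearMap.add_apply, inner_add_left, Complex.add_re, hsmul, hsmul]
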